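/- (Haber's explicit Lorentz matrix exponential) Let ζ, θ ∈ ℝ³, let A = A(ζ, θ) be the corresponding Lorentz algebra element, and let a, b ≥ 0 be defined by a² = ½[|θ|² − |ζ|² + √((|θ|² − |ζ|²)² + 4(θ·ζ)²)] and b² = ½[|ζ|² − |θ|² + √((|θ|² − |ζ|²)² + 4(θ·ζ)²)]. Assume a > 0 and b > 0 (equivalently θ·ζ ≠ 0). Then the matrix exponential of A is given by exp(A) = (1/(a² + b²)) · [f₀·I + f₁·A + f₂·A² + f₃·A³], where f₀ = b²·cos a + a²·cosh b, f₁ = (b²/a)·sin a + (a²/b)·sinh b, f₂ = cosh b − cos a, and f₃ = (sinh b)/b − (sin a)/a. -/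

import Mathlib

open Matrix

/-- The Lorentz algebra element with boost vector `ζ` and rotation vector `θ`. -/
def lorentzAlg (ζ θ : Fin 3 → ℝ) : Matrix (Fin 4) (Fin 4) ℝ :=
  !![0,   ζ 0,  ζ 1,  ζ 2;
     ζ 0, 0,    -θ 2, θ 1;
     ζ 1, θ 2,  0,    -θ 0;
     ζ 2, -θ 1, θ 0,  0]

open scoped Nat

set_option maxHeartbeats 1000000 in
theorem lorentzAlg_sq (ζ θ : Fin 3 → ℝ) :
    lorentzAlg ζ θ * lorentzAlg ζ θ =
    !![ζ 0 * ζ 0 + ζ 1 * ζ 1 + ζ 2 * ζ 2, ζ 1 * θ 2 - ζ 2 * θ 1, ζ 2 * θ 0 - ζ 0 * θ 2, ζ 0 * θ 1 - ζ 1 * θ 0;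
       -(ζ 1 * θ 2 - ζ 2 * θ 1), ζ 0 * ζ 0 - θ 1 * θ 1 - θ 2 * θ 2, ζ 0 * ζ 1 + θ 0 * θ 1, ζ 0 * ζ 2 + θ 0 * θ 2;
       -(ζ 2 * θ 0 - ζ 0 * θ 2), ζ 0 * ζ 1 + θ 0 * θ 1, ζ 1 * ζ 1 - θ 0 * θ 0 - θ 2 * θ 2, ζ 1 * ζ 2 + θ 1 * θ 2;
       -(ζ 0 * θ 1 - ζ 1 * θ 0), ζ 0 * ζ 2 + θ 0 * θ 2, ζ 1 * ζ 2 + θ 1 * θ 2, ζ 2 * ζ 2 - θ 0 * θ 0 - θ 1 * θ 1] := by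
  ext i j
  fin_cases i <;> fin_cases j <;>
    simp [lorentzAlg, Matrix.mul_apply, Fin.sum_univ_four] <;> ring

set_option maxHeartbeats 2000000 in
theorem lorentzAlg_pow_four (ζ θ : Fin 3 → ℝ) :
    lorentzAlg ζ θ ^ 4 = (ζ ⬝ᵥ ζ - θ ⬝ᵥ θ) • lorentzAlg ζ θ ^ 2
      + ((θ ⬝ᵥ ζ) ^ 2) • (1 : Matrix (Fin 4) (Fin 4) ℝ) := by
  have h4 : lorentzAlg ζ θ ^ 4 = (lorentzAlg ζ θ * lorentzAlg ζ θ) *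
      (lorentzAlg ζ θ * lorentzAlg ζ θ) := by
    calc lorentzAlg ζ θ ^ 4 = lorentzAlg ζ θ ^ 2 * lorentzAlg ζ θ ^ 2 := by rw [← pow_add]
      _ = _ := by rw [sq]
  have h2 : lorentzAlg ζ θ ^ 2 = lorentzAlg ζ θ * lorentzAlg ζ θ := sq _
  rw [h4, h2, lorentzAlg_sq]
  ext i j
  fin_cases i <;> fin_cases j <;>
    simp [Matrix.mul_apply, Fin.sum_univ_four, dotProduct, Fin.sum_univ_three,
      Matrix.one_apply] <;> ring


/-- (Haber's explicit Lorentz matrix exponential) With `a, b > 0` defined by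
`a² = ½[|θ|² − |ζ|² + √((|θ|² − |ζ|²)² + 4(θ·ζ)²)]` and
`b² = ½[|ζ|² − |θ|² + √((|θ|² − |ζ|²)² + 4(θ·ζ)²)]`, the matrix exponential of
`A = A(ζ, θ)` is `exp A = (f₀ I + f₁ A + f₂ A² + f₃ A³)/(a² + b²)` where
`f₀ = b² cos a + a² cosh b`, `f₁ = (b²/a) sin a + (a²/b) sinh b`,
`f₂ = cosh b − cos a`, `f₃ = sinh b / b − sin a / a`. -/
theorem haber_lorentz_exponential (ζ θ : Fin 3 → ℝ) (a b : ℝ)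
    (ha : 0 < a) (hb : 0 < b)
    (ha2 : a ^ 2 = (θ ⬝ᵥ θ - ζ ⬝ᵥ ζ
      + Real.sqrt ((θ ⬝ᵥ θ - ζ ⬝ᵥ ζ) ^ 2 + 4 * (θ ⬝ᵥ ζ) ^ 2)) / 2)
    (hb2 : b ^ 2 = (ζ ⬝ᵥ ζ - θ ⬝ᵥ θ
      + Real.sqrt ((θ ⬝ᵥ θ - ζ ⬝ᵥ ζ) ^ 2 + 4 * (θ ⬝ᵥ ζ) ^ 2)) / 2) :
    NormedSpace.exp (lorentzAlg ζ θ)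
      = (1 / (a ^ 2 + b ^ 2)) •
          ((b ^ 2 * Real.cos a + a ^ 2 * Real.cosh b) • (1 : Matrix (Fin 4) (Fin 4) ℝ)
            + (b ^ 2 / a * Real.sin a + a ^ 2 / b * Real.sinh b) • lorentzAlg ζ θ
            + (Real.cosh b - Real.cos a) • (lorentzAlg ζ θ) ^ 2
            + (Real.sinh b / b - Real.sin a / a) • (lorentzAlg ζ θ) ^ 3) := by
  have ha' : a ≠ 0 := ha.ne'
  have hb' : b ≠ 0 := hb.ne'
  set A := lorentzAlg ζ θ with hAdef
  set s : ℝ := a ^ 2 + b ^ 2 with hsdef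
  have hs0 : s ≠ 0 := by positivity
  -- scalar facts
  have hD : (0:ℝ) ≤ (θ ⬝ᵥ θ - ζ ⬝ᵥ ζ) ^ 2 + 4 * (θ ⬝ᵥ ζ) ^ 2 := by positivity
  have hdiff : b ^ 2 - a ^ 2 = ζ ⬝ᵥ ζ - θ ⬝ᵥ θ := by rw [ha2, hb2]; ring
  have hprod : a ^ 2 * b ^ 2 = (θ ⬝ᵥ ζ) ^ 2 := by
    have hsq := Real.sq_sqrt hD
    rw [ha2, hb2]
    nlinarith [hsq]
  -- the quartic identity
  have hA4 : A ^ 4 = (b ^ 2 - a ^ 2) • A ^ 2 + (a ^ 2 * b ^ 2) • (1 : Matrix (Fin 4) (Fin 4) ℝ) := by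
    rw [hAdef, lorentzAlg_pow_four, ← hdiff, ← hprod]
  set p : Matrix (Fin 4) (Fin 4) ℝ := A ^ 2 + a ^ 2 • 1 with hpdef
  set q : Matrix (Fin 4) (Fin 4) ℝ := b ^ 2 • 1 - A ^ 2 with hqdef
  have hAA : A ^ 2 * A ^ 2 = A ^ 4 := by rw [← pow_add]
  have hMp : A ^ 2 * p = b ^ 2 • p := by
    rw [hpdef, mul_add, mul_smul_comm, mul_one, hAA, hA4]
    module
  have hMq : A ^ 2 * q = (-(a ^ 2)) • q := by
    rw [hqdef, mul_sub, mul_smul_comm, mul_one, hAA, hA4]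
    module
  have hp : ∀ k : ℕ, A ^ (2 * k) * p = (b ^ 2) ^ k • p := by
    intro k; induction k with
    | zero => simp
    | succ k ih =>
      have : A ^ (2 * (k + 1)) = A ^ (2 * k) * A ^ 2 := by rw [← pow_add]; ring_nf
      rw [this, mul_assoc, hMp, mul_smul_comm, ih, smul_smul, pow_succ]
      ring_nf
  have hq : ∀ k : ℕ, A ^ (2 * k) * q = (-(a ^ 2)) ^ k • q := by
    intro k; induction k with
    | zero => simp
    | succ k ih =>
      have : A ^ (2 * (k + 1)) = A ^ (2 * k) * A ^ 2 := by rw [← pow_add]; ring_nf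
      rw [this, mul_assoc, hMq, mul_smul_comm, ih, smul_smul, pow_succ]
      ring_nf
  have hone : (1 : Matrix (Fin 4) (Fin 4) ℝ) = s⁻¹ • (p + q) := by
    rw [hpdef, hqdef, hsdef]
    match_scalars <;> field_simp <;> ring
  have hAeven : ∀ k : ℕ, A ^ (2 * k) = ((b ^ 2) ^ k * s⁻¹) • p + ((-(a ^ 2)) ^ k * s⁻¹) • q := by
    intro k
    calc A ^ (2 * k) = A ^ (2 * k) * 1 := (mul_one _).symm
      _ = s⁻¹ • (A ^ (2 * k) * p + A ^ (2 * k) * q) := by rw [hone, mul_smul_comm, mul_add]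
      _ = _ := by rw [hp, hq]; module
  have hAodd : ∀ k : ℕ, A ^ (2 * k + 1)
      = ((b ^ 2) ^ k * s⁻¹) • (A * p) + ((-(a ^ 2)) ^ k * s⁻¹) • (A * q) := by
    intro k
    calc A ^ (2 * k + 1) = A * A ^ (2 * k) := by rw [pow_succ']
      _ = _ := by
        rw [hAeven k, mul_add, mul_smul_comm, mul_smul_comm]
  -- series setup
  letI : SeminormedRing (Matrix (Fin 4) (Fin 4) ℝ) := Matrix.linftyOpSemiNormedRing
  letI : NormedRing (Matrix (Fin 4) (Fin 4) ℝ) := Matrix.linftyOpNormedRing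
  letI : NormedAlgebra ℝ (Matrix (Fin 4) (Fin 4) ℝ) := Matrix.linftyOpNormedAlgebra
  have keyE : ∀ k : ℕ, (((2 * k)! : ℝ)⁻¹) • A ^ (2 * k)
      = (b ^ (2 * k) / ((2 * k)! : ℝ) * s⁻¹) • p
        + ((-1) ^ k * a ^ (2 * k) / ((2 * k)! : ℝ) * s⁻¹) • q := by
    intro k
    rw [hAeven k]
    match_scalars <;> ring
  have keyO : ∀ k : ℕ, (((2 * k + 1)! : ℝ)⁻¹) • A ^ (2 * k + 1)
      = (b ^ (2 * k + 1) / ((2 * k + 1)! : ℝ) * (b⁻¹ * s⁻¹)) • (A * p)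
        + ((-1) ^ k * a ^ (2 * k + 1) / ((2 * k + 1)! : ℝ) * (a⁻¹ * s⁻¹)) • (A * q) := by
    intro k
    rw [hAodd k]
    match_scalars <;> field_simp <;> ring
  have h1 := ((Real.hasSum_cosh b).mul_right s⁻¹).smul_const p
  have h2 := ((Real.hasSum_cos a).mul_right s⁻¹).smul_const q
  have h3 := ((Real.hasSum_sinh b).mul_right (b⁻¹ * s⁻¹)).smul_const (A * p)
  have h4 := ((Real.hasSum_sin a).mul_right (a⁻¹ * s⁻¹)).smul_const (A * q)
  have heven : HasSum (fun k : ℕ => (((2 * k)! : ℝ)⁻¹) • A ^ (2 * k))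
      ((Real.cosh b * s⁻¹) • p + (Real.cos a * s⁻¹) • q) := by
    simp_rw [keyE]; exact h1.add h2
  have hodd : HasSum (fun k : ℕ => (((2 * k + 1)! : ℝ)⁻¹) • A ^ (2 * k + 1))
      ((Real.sinh b * (b⁻¹ * s⁻¹)) • (A * p) + (Real.sin a * (a⁻¹ * s⁻¹)) • (A * q)) := by
    simp_rw [keyO]; exact h3.add h4
  have htot : HasSum (fun n : ℕ => ((n ! : ℝ)⁻¹) • A ^ n)
      (((Real.cosh b * s⁻¹) • p + (Real.cos a * s⁻¹) • q)
        + ((Real.sinh b * (b⁻¹ * s⁻¹)) • (A * p) + (Real.sin a * (a⁻¹ * s⁻¹)) • (A * q))) :=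
    HasSum.even_add_odd heven hodd
  -- final algebra
  have hAp : A * p = A ^ 3 + a ^ 2 • A := by
    rw [hpdef, mul_add, mul_smul_comm, mul_one, ← pow_succ']
  have hAq : A * q = b ^ 2 • A - A ^ 3 := by
    rw [hqdef, mul_sub, mul_smul_comm, mul_one, ← pow_succ']
  have hfinal : ((Real.cosh b * s⁻¹) • p + (Real.cos a * s⁻¹) • q)
        + ((Real.sinh b * (b⁻¹ * s⁻¹)) • (A * p) + (Real.sin a * (a⁻¹ * s⁻¹)) • (A * q))
      = (1 / s) •
          ((b ^ 2 * Real.cos a + a ^ 2 * Real.cosh b) • (1 : Matrix (Fin 4) (Fin 4) ℝ)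
            + (b ^ 2 / a * Real.sin a + a ^ 2 / b * Real.sinh b) • A
            + (Real.cosh b - Real.cos a) • A ^ 2
            + (Real.sinh b / b - Real.sin a / a) • A ^ 3) := by
    rw [hAp, hAq, hpdef, hqdef, hsdef]
    match_scalars <;> field_simp <;> ring
  rw [NormedSpace.exp_eq_tsum (𝕂 := ℝ)]
  exact htot.tsum_eq.trans hfinal
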